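/- Let S be a countable group acting on a countable set I, let F := {i ∈ I : s·i = i for all s ∈ S} be the set of global fixed points, and assume that the S-orbit of every i ∈ I ∖ F is infinite. Let X₀ be a standard Borel space, μ₀ a probability measure on X₀, and μ = μ₀^{⊗I} the product probability measure on X₀^I. If T ⊆ X₀^I is measurable and μ(T_s⁻¹(T) Δ T) = 0 for every s ∈ S, then there exists a measurable set B ⊆ X₀^F such that μ(T Δ π_F⁻¹(B)) = 0, where π_F : X₀^I → X₀^F is the restriction map x ↦ x|_F. -/

import Mathlib

open MeasureTheory Set Function
open scoped Pointwise

namespace Stmt5Aux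

variable {X₀ : Type*} [MeasurableSpace X₀]

/-- The collection of measurable cylinder sets in a product space. -/
def cylSets (ι : Type*) (X₀ : Type*) [MeasurableSpace X₀] : Set (Set (ι → X₀)) :=
  {A | ∃ (t : Finset ι) (f : ι → Set X₀), (∀ i, MeasurableSet (f i)) ∧
    A = {x | ∀ i ∈ t, x i ∈ f i}}

lemma univ_mem_cylSets (ι : Type*) : Set.univ ∈ cylSets ι X₀ :=
  ⟨∅, fun _ => Set.univ, fun _ => .univ, by simp⟩

lemma isCountablySpanning_cylSets (ι : Type*) : IsCountablySpanning (cylSets ι X₀) :=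
  ⟨fun _ => Set.univ, fun _ => univ_mem_cylSets ι, Set.iUnion_const _⟩

lemma measurableSet_of_mem_cylSets {ι : Type*} {A : Set (ι → X₀)} (hA : A ∈ cylSets ι X₀) :
    MeasurableSet A := by
  obtain ⟨t, f, hf, rfl⟩ := hA
  have : {x : ι → X₀ | ∀ i ∈ t, x i ∈ f i} = ⋂ i ∈ t, (fun x => x i) ⁻¹' f i := by
    ext x; simp
  rw [this]
  exact MeasurableSet.biInter t.countable_toSet
    (fun i _ => (measurable_pi_apply i) (hf i))

lemma isPiSystem_cylSets (ι : Type*) : IsPiSystem (cylSets ι X₀) := by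
  classical
  rintro A ⟨t₁, f₁, hf₁, rfl⟩ B ⟨t₂, f₂, hf₂, rfl⟩ -
  refine ⟨t₁ ∪ t₂,
    fun i => (if i ∈ t₁ then f₁ i else Set.univ) ∩ (if i ∈ t₂ then f₂ i else Set.univ),
    fun i => ((by split <;> [exact hf₁ i; exact .univ] : MeasurableSet _).inter
      (by split <;> [exact hf₂ i; exact .univ])), ?_⟩
  ext x
  simp only [Set.mem_inter_iff, Set.mem_setOf_eq, Finset.mem_union]
  constructor
  · rintro ⟨h1, h2⟩ i hi
    constructor <;> split <;> first | exact h1 i ‹_› | exact h2 i ‹_› | trivial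
  · intro h
    constructor
    · intro i hi
      have := (h i (Or.inl hi)).1
      rwa [if_pos hi] at this
    · intro i hi
      have := (h i (Or.inr hi)).2
      rwa [if_pos hi] at this

lemma generateFrom_cylSets (ι : Type*) :
    (MeasurableSpace.pi : MeasurableSpace (ι → X₀)) =
      MeasurableSpace.generateFrom (cylSets ι X₀) := by
  classical
  refine le_antisymm ?_ (MeasurableSpace.generateFrom_le
    fun A hA => measurableSet_of_mem_cylSets hA)
  refine iSup_le fun i => ?_
  intro A hA
  obtain ⟨B, hB, rfl⟩ := hA
  refine MeasurableSpace.measurableSet_generateFrom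
    ⟨{i}, fun j => if j = i then B else Set.univ, ?_, ?_⟩
  · intro j; dsimp only; split <;> [exact hB; exact .univ]
  · ext x; simp

lemma ext_cylSets {ι : Type*} {μ ν : Measure (ι → X₀)} [IsProbabilityMeasure μ]
    [IsProbabilityMeasure ν]
    (h : ∀ (t : Finset ι) (f : ι → Set X₀), (∀ i, MeasurableSet (f i)) →
      μ {x | ∀ i ∈ t, x i ∈ f i} = ν {x | ∀ i ∈ t, x i ∈ f i}) : μ = ν := by
  refine ext_of_generate_finite _ (generateFrom_cylSets ι) (isPiSystem_cylSets ι) ?_ (by simp)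
  rintro A ⟨t, f, hf, rfl⟩
  exact h t f hf

/-- B. H. Neumann style: a finite set of points with infinite orbits can be moved off itself. -/
lemma moveOff {S I : Type*} [Group S] [MulAction S I] (t : Finset I)
    (ht : ∀ j ∈ t, (MulAction.orbit S j).Infinite) :
    ∃ s : S, ∀ j ∈ t, ∀ k ∈ t, s • j ≠ k := by
  classical
  by_contra hc
  push_neg at hc
  have hcov : ⋃ p ∈ t ×ˢ t, (if h : ∃ u : S, u • p.1 = p.2 then h.choose else 1) •
      ((MulAction.stabilizer S p.1 : Subgroup S) : Set S) = Set.univ := by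
    refine Set.eq_univ_of_forall fun u => ?_
    obtain ⟨j, hj, k, hk, huv⟩ := hc u
    have hex : ∃ v : S, v • j = k := ⟨u, huv⟩
    refine Set.mem_iUnion₂.mpr ⟨(j, k), Finset.mk_mem_product hj hk, ?_⟩
    rw [dif_pos hex, mem_leftCoset_iff, SetLike.mem_coe, MulAction.mem_stabilizer_iff,
      mul_smul, huv, inv_smul_eq_iff]
    exact hex.choose_spec.symm
  obtain ⟨p, hp, hfin⟩ := Subgroup.exists_finiteIndex_of_leftCoset_cover hcov
  haveI := hfin
  have hfinorb : Finite (MulAction.orbit S p.1) :=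
    Finite.of_equiv _ (MulAction.orbitEquivQuotientStabilizer S p.1).symm
  exact ht p.1 (Finset.mem_product.mp hp).1 (Set.toFinite _)

variable {I : Type*}

/-- Product formula for generalized cylinders along an injective reindexing. -/
lemma cylProd (μ₀ : Measure X₀) (μ : Measure (I → X₀))
    (hμ : ∀ (s : Finset I) (f : I → Set X₀), (∀ i, MeasurableSet (f i)) →
      μ {x : I → X₀ | ∀ i ∈ s, x i ∈ f i} = ∏ i ∈ s, μ₀ (f i))
    {κ : Type*} (m : κ → I) (hm : Function.Injective m) (t : Finset κ)
    (f : κ → Set X₀) (hf : ∀ j, MeasurableSet (f j)) :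
    μ {x | ∀ j ∈ t, x (m j) ∈ f j} = ∏ j ∈ t, μ₀ (f j) := by
  classical
  set fe : I → Set X₀ := Function.extend m f (fun _ => Set.univ) with hfe_def
  have hfe : ∀ i, MeasurableSet (fe i) := by
    intro i; rw [hfe_def, Function.extend_def]; split
    exacts [hf _, MeasurableSet.univ]
  have happ : ∀ j, fe (m j) = f j := fun j => hm.extend_apply f _ j
  have hset : {x : I → X₀ | ∀ j ∈ t, x (m j) ∈ f j}
      = {x | ∀ i ∈ t.image m, x i ∈ fe i} := by
    ext x
    simp only [Set.mem_setOf_eq, Finset.mem_image]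
    constructor
    · rintro h i ⟨j, hj, rfl⟩; rw [happ]; exact h j hj
    · intro h j hj; have := h (m j) ⟨j, hj, rfl⟩; rwa [happ] at this
  rw [hset, hμ _ fe hfe, Finset.prod_image (fun a _ b _ h => hm h)]
  exact Finset.prod_congr rfl fun j _ => by rw [happ]

/-- Three-fold product formula. -/
lemma cylProd₃ (μ₀ : Measure X₀) (μ : Measure (I → X₀))
    (hμ : ∀ (s : Finset I) (f : I → Set X₀), (∀ i, MeasurableSet (f i)) →
      μ {x : I → X₀ | ∀ i ∈ s, x i ∈ f i} = ∏ i ∈ s, μ₀ (f i))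
    {κ₁ κ₂ κ₃ : Type*} (m₁ : κ₁ → I) (m₂ : κ₂ → I) (m₃ : κ₃ → I)
    (hm₁ : Function.Injective m₁) (hm₂ : Function.Injective m₂)
    (hm₃ : Function.Injective m₃)
    (h12 : ∀ a b, m₁ a ≠ m₂ b) (h13 : ∀ a b, m₁ a ≠ m₃ b) (h23 : ∀ a b, m₂ a ≠ m₃ b)
    (t₁ : Finset κ₁) (t₂ : Finset κ₂) (t₃ : Finset κ₃)
    (f₁ : κ₁ → Set X₀) (f₂ : κ₂ → Set X₀) (f₃ : κ₃ → Set X₀)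
    (hf₁ : ∀ j, MeasurableSet (f₁ j)) (hf₂ : ∀ j, MeasurableSet (f₂ j))
    (hf₃ : ∀ j, MeasurableSet (f₃ j)) :
    μ ({x | ∀ j ∈ t₁, x (m₁ j) ∈ f₁ j} ∩ ({x | ∀ j ∈ t₂, x (m₂ j) ∈ f₂ j} ∩
        {x | ∀ j ∈ t₃, x (m₃ j) ∈ f₃ j}))
      = (∏ j ∈ t₁, μ₀ (f₁ j)) * ((∏ j ∈ t₂, μ₀ (f₂ j)) * (∏ j ∈ t₃, μ₀ (f₃ j))) := by
  classical
  have hminj : Function.Injective (Sum.elim m₁ (Sum.elim m₂ m₃)) :=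
    hm₁.sumElim (hm₂.sumElim hm₃ h23) (by rintro a (b | b) <;> [exact h12 a b; exact h13 a b])
  have := cylProd μ₀ μ hμ _ hminj (t₁.disjSum (t₂.disjSum t₃))
    (Sum.elim f₁ (Sum.elim f₂ f₃))
    (by rintro (j | j | j) <;> simp [hf₁, hf₂, hf₃])
  rw [Finset.prod_disjSum, Finset.prod_disjSum] at this
  simp only [Sum.elim_inl, Sum.elim_inr] at this
  rw [← this]
  congr 1
  ext x
  simp only [Set.mem_setOf_eq, Set.mem_inter_iff, Finset.mem_disjSum]
  constructor
  · rintro ⟨h1, h2, h3⟩ j hj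
    rcases hj with ⟨a, ha, rfl⟩ | ⟨b, hb, rfl⟩
    · exact h1 a ha
    · rcases hb with ⟨a, ha, rfl⟩ | ⟨c, hc, rfl⟩
      · exact h2 a ha
      · exact h3 c hc
  · intro h
    refine ⟨fun j hj => h (.inl j) (Or.inl ⟨j, hj, rfl⟩),
      fun j hj => h (.inr (.inl j)) (Or.inr ⟨.inl j, Or.inl ⟨j, hj, rfl⟩, rfl⟩),
      fun j hj => h (.inr (.inr j)) (Or.inr ⟨.inr j, Or.inr ⟨j, hj, rfl⟩, rfl⟩)⟩

end Stmt5Aux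

namespace Stmt5Aux2
open Stmt5Aux MeasurableSpace

variable {X₀ : Type*} [MeasurableSpace X₀]

lemma isCountablySpanning_of_univ_mem {α : Type*} {C : Set (Set α)} (h : Set.univ ∈ C) :
    IsCountablySpanning C := ⟨fun _ => Set.univ, fun _ => h, Set.iUnion_const _⟩

lemma univ_mem_image2_prod {α β : Type*} {C : Set (Set α)} {D : Set (Set β)}
    (hC : Set.univ ∈ C) (hD : Set.univ ∈ D) :
    Set.univ ∈ Set.image2 (· ×ˢ ·) C D :=
  ⟨Set.univ, hC, Set.univ, hD, Set.univ_prod_univ⟩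

lemma generateFrom_cylSets_prod (ι κ : Type*) :
    (Prod.instMeasurableSpace : MeasurableSpace ((ι → X₀) × (κ → X₀))) =
      MeasurableSpace.generateFrom
        (Set.image2 (· ×ˢ ·) (cylSets ι X₀) (cylSets κ X₀)) := by
  rw [show (MeasurableSpace.pi : MeasurableSpace (ι → X₀)) = _ from generateFrom_cylSets ι,
    show (MeasurableSpace.pi : MeasurableSpace (κ → X₀)) = _ from generateFrom_cylSets κ]
  exact generateFrom_prod_eq (isCountablySpanning_cylSets ι) (isCountablySpanning_cylSets κ)

lemma ext_cylSets_prod {ι κ : Type*} {μ ν : Measure ((ι → X₀) × (κ → X₀))}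
    [IsProbabilityMeasure μ] [IsProbabilityMeasure ν]
    (h : ∀ A ∈ cylSets ι X₀, ∀ B ∈ cylSets κ X₀, μ (A ×ˢ B) = ν (A ×ˢ B)) : μ = ν := by
  refine ext_of_generate_finite _ (generateFrom_cylSets_prod ι κ)
    (IsPiSystem.prod (isPiSystem_cylSets ι) (isPiSystem_cylSets κ)) ?_ (by simp)
  rintro _ ⟨A, hA, B, hB, rfl⟩
  exact h A hA B hB

lemma generateFrom_cylSets_prod₃ (ι κ κ' : Type*) :
    (Prod.instMeasurableSpace : MeasurableSpace ((ι → X₀) × ((κ → X₀) × (κ' → X₀)))) =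
      MeasurableSpace.generateFrom
        (Set.image2 (· ×ˢ ·) (cylSets ι X₀)
          (Set.image2 (· ×ˢ ·) (cylSets κ X₀) (cylSets κ' X₀))) := by
  rw [show (MeasurableSpace.pi : MeasurableSpace (ι → X₀)) = _ from generateFrom_cylSets ι,
    show (Prod.instMeasurableSpace : MeasurableSpace ((κ → X₀) × (κ' → X₀))) = _ from
      generateFrom_cylSets_prod κ κ']
  exact generateFrom_prod_eq (isCountablySpanning_cylSets ι)
    (isCountablySpanning_of_univ_mem
      (univ_mem_image2_prod (univ_mem_cylSets κ) (univ_mem_cylSets κ')))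

lemma ext_cylSets_prod₃ {ι κ κ' : Type*}
    {μ ν : Measure ((ι → X₀) × ((κ → X₀) × (κ' → X₀)))}
    [IsProbabilityMeasure μ] [IsProbabilityMeasure ν]
    (h : ∀ A ∈ cylSets ι X₀, ∀ B ∈ cylSets κ X₀, ∀ B' ∈ cylSets κ' X₀,
      μ (A ×ˢ (B ×ˢ B')) = ν (A ×ˢ (B ×ˢ B'))) : μ = ν := by
  refine ext_of_generate_finite _ (generateFrom_cylSets_prod₃ ι κ κ')
    (IsPiSystem.prod (isPiSystem_cylSets ι)
      (IsPiSystem.prod (isPiSystem_cylSets κ) (isPiSystem_cylSets κ'))) ?_ (by simp)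
  rintro _ ⟨A, hA, _, ⟨B, hB, B', hB', rfl⟩, rfl⟩
  exact h A hA B hB B' hB'

end Stmt5Aux2

namespace Stmt5Aux

/-- Two-fold product formula. -/
lemma cylProd₂ {X₀ I : Type*} [MeasurableSpace X₀] (μ₀ : Measure X₀) (μ : Measure (I → X₀))
    (hμ : ∀ (s : Finset I) (f : I → Set X₀), (∀ i, MeasurableSet (f i)) →
      μ {x : I → X₀ | ∀ i ∈ s, x i ∈ f i} = ∏ i ∈ s, μ₀ (f i))
    {κ₁ κ₂ : Type*} (m₁ : κ₁ → I) (m₂ : κ₂ → I)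
    (hm₁ : Function.Injective m₁) (hm₂ : Function.Injective m₂)
    (h12 : ∀ a b, m₁ a ≠ m₂ b)
    (t₁ : Finset κ₁) (t₂ : Finset κ₂)
    (f₁ : κ₁ → Set X₀) (f₂ : κ₂ → Set X₀)
    (hf₁ : ∀ j, MeasurableSet (f₁ j)) (hf₂ : ∀ j, MeasurableSet (f₂ j)) :
    μ ({x | ∀ j ∈ t₁, x (m₁ j) ∈ f₁ j} ∩ {x | ∀ j ∈ t₂, x (m₂ j) ∈ f₂ j})
      = (∏ j ∈ t₁, μ₀ (f₁ j)) * (∏ j ∈ t₂, μ₀ (f₂ j)) := by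
  classical
  have hminj : Function.Injective (Sum.elim m₁ m₂) := hm₁.sumElim hm₂ h12
  have := cylProd μ₀ μ hμ _ hminj (t₁.disjSum t₂) (Sum.elim f₁ f₂)
    (by rintro (j | j) <;> simp [hf₁, hf₂])
  rw [Finset.prod_disjSum] at this
  simp only [Sum.elim_inl, Sum.elim_inr] at this
  rw [← this]
  congr 1
  ext x
  simp only [Set.mem_setOf_eq, Set.mem_inter_iff, Finset.mem_disjSum]
  constructor
  · rintro ⟨h1, h2⟩ j hj
    rcases hj with ⟨a, ha, rfl⟩ | ⟨b, hb, rfl⟩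
    · exact h1 a ha
    · exact h2 b hb
  · intro h
    exact ⟨fun j hj => h (.inl j) (Or.inl ⟨j, hj, rfl⟩),
      fun j hj => h (.inr j) (Or.inr ⟨j, hj, rfl⟩)⟩

/-- measure of cylinder preimage under a reindexing map. -/
lemma mapResCyl {X₀ I : Type*} [MeasurableSpace X₀] (μ₀ : Measure X₀) (μ : Measure (I → X₀))
    (hμ : ∀ (s : Finset I) (f : I → Set X₀), (∀ i, MeasurableSet (f i)) →
      μ {x : I → X₀ | ∀ i ∈ s, x i ∈ f i} = ∏ i ∈ s, μ₀ (f i))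
    {κ : Type*} (m : κ → I) (hm : Function.Injective m)
    (t : Finset κ) (f : κ → Set X₀) (hf : ∀ j, MeasurableSet (f j)) :
    μ.map (fun x (j : κ) => x (m j)) {y | ∀ j ∈ t, y j ∈ f j} = ∏ j ∈ t, μ₀ (f j) := by
  rw [Measure.map_apply (μ := μ) (f := fun (x : I → X₀) (j : κ) => x (m j))
    (measurable_pi_lambda _ fun j => measurable_pi_apply _)
    (measurableSet_of_mem_cylSets ⟨t, f, hf, rfl⟩)]
  exact cylProd μ₀ μ hμ m hm t f hf

end Stmt5Aux
open MeasureTheory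
open scoped ENNReal

/-- Let a countable group `S` act on a countable set `I`, let `F` be the set of global
fixed points of the action, and assume every `S`-orbit outside `F` is infinite. If a
measurable subset `T` of `X₀^I` is invariant up to `μ`-null sets under all the shifts
`T_s x = fun i => x (s⁻¹ • i)`, where `μ = μ₀^{⊗ I}` is the product probability measure
(characterized by its values on measurable cylinder sets), then up to a `μ`-null set `T`
is the preimage of a measurable set `B ⊆ X₀^F` under the restriction map `x ↦ x|_F`. -/
theorem stmt5 {S I X₀ : Type*} [Group S] [MulAction S I] [Countable S] [Countable I]
    [MeasurableSpace X₀] [StandardBorelSpace X₀]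
    (μ₀ : Measure X₀) [IsProbabilityMeasure μ₀]
    (μ : Measure (I → X₀)) [IsProbabilityMeasure μ]
    (hμ : ∀ (s : Finset I) (f : I → Set X₀), (∀ i, MeasurableSet (f i)) →
      μ {x : I → X₀ | ∀ i ∈ s, x i ∈ f i} = ∏ i ∈ s, μ₀ (f i))
    (F : Set I) (hF : F = {i : I | ∀ s : S, s • i = i})
    (horb : ∀ i ∉ F, (MulAction.orbit S i).Infinite)
    (T : Set (I → X₀)) (hT : MeasurableSet T)
    (hinv : ∀ s : S, μ (symmDiff ((fun x : I → X₀ => fun i : I => x (s⁻¹ • i)) ⁻¹' T) T) = 0) :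
    ∃ B : Set (F → X₀), MeasurableSet B ∧
      μ (symmDiff T ((fun x : I → X₀ => fun i : F => x i) ⁻¹' B)) = 0 := by
  classical
  -- fixed point set facts
  have hFfix : ∀ (u : S) (i : I), i ∈ F → u • i = i := by
    subst hF; exact fun u i hi => hi u
  have hFiff : ∀ (u : S) (i : I), u • i ∈ F ↔ i ∈ F := by
    intro u i
    constructor
    · intro h
      have h2 := hFfix u⁻¹ _ h
      rw [inv_smul_smul] at h2
      rw [h2]; exact h
    · intro h; rw [hFfix u i h]; exact h
  -- projections
  set πF : (I → X₀) → (↥F → X₀) := fun x j => x ↑j with hπFdef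
  have hπF : Measurable πF := measurable_pi_lambda _ fun j => measurable_pi_apply _
  set πG : (I → X₀) → ({i : I // ¬ i ∈ F} → X₀) := fun x j => x ↑j with hπGdef
  have hπG : Measurable πG := measurable_pi_lambda _ fun j => measurable_pi_apply _
  set μF : Measure (↥F → X₀) := μ.map πF with hμFdef
  set μG : Measure ({i : I // ¬ i ∈ F} → X₀) := μ.map πG with hμGdef
  haveI : IsProbabilityMeasure μF := Measure.isProbabilityMeasure_map hπF.aemeasurable
  haveI : IsProbabilityMeasure μG := Measure.isProbabilityMeasure_map hπG.aemeasurable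
  -- cylinder values of μF, μG
  have hcylF : ∀ (t : Finset ↥F) (g : ↥F → Set X₀), (∀ j, MeasurableSet (g j)) →
      μF {y | ∀ j ∈ t, y j ∈ g j} = ∏ j ∈ t, μ₀ (g j) := by
    intro t g hg
    rw [hμFdef]
    exact Stmt5Aux.mapResCyl μ₀ μ hμ Subtype.val Subtype.val_injective t g hg
  have hcylG : ∀ (t : Finset {i : I // ¬ i ∈ F}) (g : {i : I // ¬ i ∈ F} → Set X₀),
      (∀ j, MeasurableSet (g j)) →
      μG {y | ∀ j ∈ t, y j ∈ g j} = ∏ j ∈ t, μ₀ (g j) := by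
    intro t g hg
    rw [hμGdef]
    exact Stmt5Aux.mapResCyl μ₀ μ hμ Subtype.val Subtype.val_injective t g hg
  -- the measurable equivalence splitting off the fixed coordinates
  set e : (I → X₀) ≃ᵐ (↥F → X₀) × ({i : I // ¬ i ∈ F} → X₀) :=
    MeasurableEquiv.piEquivPiSubtypeProd (fun _ : I => X₀) (fun i => i ∈ F) with hedef
  have hepre : ∀ A, ⇑e ⁻¹' (⇑e.symm ⁻¹' A) = A := by
    intro A
    rw [← Set.preimage_comp, MeasurableEquiv.symm_comp_self, Set.preimage_id]
  have heprod : ∀ (A : Set (↥F → X₀)) (Bc : Set ({i : I // ¬ i ∈ F} → X₀)),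
      ⇑e ⁻¹' (A ×ˢ Bc) = πF ⁻¹' A ∩ πG ⁻¹' Bc := fun A Bc => rfl
  -- μ.map e is the product measure
  have hprodFG : μ.map ⇑e = μF.prod μG := by
    haveI : IsProbabilityMeasure (μ.map ⇑e) :=
      Measure.isProbabilityMeasure_map e.measurable.aemeasurable
    refine Stmt5Aux2.ext_cylSets_prod ?_
    rintro A ⟨t₁, f₁, hf₁, rfl⟩ Bc ⟨t₂, f₂, hf₂, rfl⟩
    rw [Measure.map_apply e.measurable
      ((Stmt5Aux.measurableSet_of_mem_cylSets ⟨t₁, f₁, hf₁, rfl⟩).prod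
        (Stmt5Aux.measurableSet_of_mem_cylSets ⟨t₂, f₂, hf₂, rfl⟩)),
      heprod, Measure.prod_prod, hcylF t₁ f₁ hf₁, hcylG t₂ f₂ hf₂]
    exact Stmt5Aux.cylProd₂ μ₀ μ hμ Subtype.val Subtype.val Subtype.val_injective
      Subtype.val_injective (fun a b h => absurd (h ▸ a.2) b.2) t₁ t₂ f₁ f₂ hf₁ hf₂
  have hmape : ∀ (A : Set ((↥F → X₀) × ({i : I // ¬ i ∈ F} → X₀))), MeasurableSet A →
      μ (⇑e ⁻¹' A) = (μF.prod μG) A := by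
    intro A hA
    rw [← hprodFG, Measure.map_apply e.measurable hA]
  -- shift invariance of μ
  have hTsmeas : ∀ s : S, Measurable (fun x : I → X₀ => fun i : I => x (s⁻¹ • i)) :=
    fun s => measurable_pi_lambda _ fun i => measurable_pi_apply _
  have hshift : ∀ (s : S) (A : Set (I → X₀)), MeasurableSet A →
      μ ((fun x : I → X₀ => fun i : I => x (s⁻¹ • i)) ⁻¹' A) = μ A := by
    intro s A hA
    have hmap : μ.map (fun x : I → X₀ => fun i : I => x (s⁻¹ • i)) = μ := by
      haveI : IsProbabilityMeasure (μ.map (fun x : I → X₀ => fun i : I => x (s⁻¹ • i))) :=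
        Measure.isProbabilityMeasure_map (hTsmeas s).aemeasurable
      refine Stmt5Aux.ext_cylSets ?_
      intro t g hg
      rw [hμ t g hg, Measure.map_apply (hTsmeas s)
        (Stmt5Aux.measurableSet_of_mem_cylSets ⟨t, g, hg, rfl⟩)]
      exact Stmt5Aux.cylProd μ₀ μ hμ (fun i => s⁻¹ • i) (MulAction.injective s⁻¹) t g hg
    conv_rhs => rw [← hmap]
    rw [Measure.map_apply (hTsmeas s) hA]
  -- the algebra of sets depending on all fixed coordinates and finitely many moving ones
  set ψ : (t : Finset {i : I // ¬ i ∈ F}) → (I → X₀) → (↥F → X₀) × (↥t → X₀) :=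
    fun t x => (πF x, fun j => x ↑↑j) with hψdef
  have hψmeas : ∀ t, Measurable (ψ t) := fun t =>
    hπF.prodMk (measurable_pi_lambda _ fun j => measurable_pi_apply _)
  set 𝒜 : Set (Set (I → X₀)) :=
    {A | ∃ (t : Finset {i : I // ¬ i ∈ F}) (D : Set ((↥F → X₀) × (↥t → X₀))),
      MeasurableSet D ∧ A = ψ t ⁻¹' D} with h𝒜def
  have hAlg : MeasureTheory.IsSetAlgebra 𝒜 := by
    constructor
    · exact ⟨∅, ∅, MeasurableSet.empty, by simp⟩
    · rintro A ⟨t, D, hD, rfl⟩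
      exact ⟨t, Dᶜ, hD.compl, by rw [Set.preimage_compl]⟩
    · rintro A B ⟨t₁, D₁, hD₁, rfl⟩ ⟨t₂, D₂, hD₂, rfl⟩
      refine ⟨t₁ ∪ t₂,
        (fun p : (↥F → X₀) × (↥(t₁ ∪ t₂) → X₀) =>
          (p.1, fun j : ↥t₁ => p.2 ⟨↑j, Finset.mem_union_left _ j.2⟩)) ⁻¹' D₁ ∪
        (fun p : (↥F → X₀) × (↥(t₁ ∪ t₂) → X₀) =>
          (p.1, fun j : ↥t₂ => p.2 ⟨↑j, Finset.mem_union_right _ j.2⟩)) ⁻¹' D₂, ?_, ?_⟩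
      · exact ((measurable_fst.prodMk (measurable_pi_lambda _ fun j =>
          (measurable_pi_apply _).comp measurable_snd)) hD₁).union
          ((measurable_fst.prodMk (measurable_pi_lambda _ fun j =>
          (measurable_pi_apply _).comp measurable_snd)) hD₂)
      · rw [Set.preimage_union]; rfl
  have hgen : (MeasurableSpace.pi : MeasurableSpace (I → X₀)) =
      MeasurableSpace.generateFrom 𝒜 := by
    refine le_antisymm (iSup_le fun i => ?_) (MeasurableSpace.generateFrom_le ?_)
    · intro A hA
      obtain ⟨Bs, hBs, rfl⟩ := hA
      refine MeasurableSpace.measurableSet_generateFrom ?_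
      by_cases hi : i ∈ F
      · exact ⟨∅, {p | p.1 ⟨i, hi⟩ ∈ Bs},
          by exact ((measurable_pi_apply _).comp measurable_fst) hBs, rfl⟩
      · exact ⟨{⟨i, hi⟩}, {p | p.2 ⟨⟨i, hi⟩, Finset.mem_singleton_self _⟩ ∈ Bs},
          by exact ((measurable_pi_apply _).comp measurable_snd) hBs, rfl⟩
    · rintro A ⟨t, D, hD, rfl⟩
      exact (hψmeas t) hD
  have hdense := MeasureTheory.Measure.MeasureDense.of_generateFrom_isSetAlgebra_finite
    (μ := μ) hAlg hgen
  -- the target candidate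
  set T' : Set ((↥F → X₀) × ({i : I // ¬ i ∈ F} → X₀)) := ⇑e.symm ⁻¹' T with hT'def
  have hT' : MeasurableSet T' := e.symm.measurable hT
  have hTpre : ⇑e ⁻¹' T' = T := hepre T
  set f : (↥F → X₀) → ℝ≥0∞ := fun y => μG (Prod.mk y ⁻¹' T') with hfdef
  have hf_meas : Measurable f := measurable_measure_prodMk_left hT'
  have hfle : ∀ y, f y ≤ 1 := fun y => prob_le_one
  -- the doubled space
  set ρ : Measure ((↥F → X₀) × (({i : I // ¬ i ∈ F} → X₀) × ({i : I // ¬ i ∈ F} → X₀))) :=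
    μF.prod (μG.prod μG) with hρdef
  haveI : IsProbabilityMeasure ρ := by rw [hρdef]; infer_instance
  have hp12 : Measurable (fun w : (↥F → X₀) ×
      (({i : I // ¬ i ∈ F} → X₀) × ({i : I // ¬ i ∈ F} → X₀)) => (w.1, w.2.1)) :=
    measurable_fst.prodMk (measurable_fst.comp measurable_snd)
  have hp13 : Measurable (fun w : (↥F → X₀) ×
      (({i : I // ¬ i ∈ F} → X₀) × ({i : I // ¬ i ∈ F} → X₀)) => (w.1, w.2.2)) :=
    measurable_fst.prodMk (measurable_snd.comp measurable_snd)
  have hmap12 : ρ.map (fun w : (↥F → X₀) ×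
      (({i : I // ¬ i ∈ F} → X₀) × ({i : I // ¬ i ∈ F} → X₀)) => (w.1, w.2.1))
      = μF.prod μG := by
    rw [hρdef,
      show (fun w : (↥F → X₀) × (({i : I // ¬ i ∈ F} → X₀) × ({i : I // ¬ i ∈ F} → X₀)) =>
        (w.1, w.2.1)) = Prod.map id Prod.fst from rfl,
      ← Measure.map_prod_map _ _ measurable_id measurable_fst, Measure.map_id,
      Measure.map_fst_prod, measure_univ, one_smul]
  have hmap13 : ρ.map (fun w : (↥F → X₀) ×
      (({i : I // ¬ i ∈ F} → X₀) × ({i : I // ¬ i ∈ F} → X₀)) => (w.1, w.2.2))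
      = μF.prod μG := by
    rw [hρdef,
      show (fun w : (↥F → X₀) × (({i : I // ¬ i ∈ F} → X₀) × ({i : I // ¬ i ∈ F} → X₀)) =>
        (w.1, w.2.2)) = Prod.map id Prod.snd from rfl,
      ← Measure.map_prod_map _ _ measurable_id measurable_snd, Measure.map_id,
      Measure.map_snd_prod, measure_univ, one_smul]
  set T₁ := (fun w : (↥F → X₀) ×
    (({i : I // ¬ i ∈ F} → X₀) × ({i : I // ¬ i ∈ F} → X₀)) => (w.1, w.2.1)) ⁻¹' T' with hT₁def
  set T₂ := (fun w : (↥F → X₀) ×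
    (({i : I // ¬ i ∈ F} → X₀) × ({i : I // ¬ i ∈ F} → X₀)) => (w.1, w.2.2)) ⁻¹' T' with hT₂def
  have hT₁ : MeasurableSet T₁ := hp12 hT'
  have hT₂ : MeasurableSet T₂ := hp13 hT'
  have hkey : ∀ ε : ℝ, 0 < ε → ρ (symmDiff T₁ T₂) ≤ 4 * ENNReal.ofReal ε := by
    intro ε hε
    obtain ⟨A, hA𝒜, hAappr⟩ := hdense.approx T hT (measure_ne_top μ T) ε hε
    rw [h𝒜def] at hA𝒜
    obtain ⟨t, D, hD, rfl⟩ := hA𝒜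
    have hCmeas : MeasurableSet (ψ t ⁻¹' D) := (hψmeas t) hD
    -- choose the group element moving the finitely many non-fixed coordinates off themselves
    have horbt : ∀ j ∈ t.image Subtype.val, (MulAction.orbit S j).Infinite := by
      intro j hj
      obtain ⟨a, -, rfl⟩ := Finset.mem_image.mp hj
      exact horb _ a.2
    obtain ⟨u, hu⟩ := Stmt5Aux.moveOff (t.image Subtype.val) horbt
    set s : S := u⁻¹ with hsdef
    have hsinv : s⁻¹ = u := by rw [hsdef, inv_inv]
    have hndisj : ∀ a b : ↥t, (↑↑a : I) ≠ s⁻¹ • ↑↑b := by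
      intro a b h
      rw [hsinv] at h
      exact hu _ (Finset.mem_image_of_mem _ b.2) _ (Finset.mem_image_of_mem _ a.2) h.symm
    have hinj₂ : Function.Injective (fun j : ↥t => (↑↑j : I)) := by
      intro a b h
      exact Subtype.ext (Subtype.ext h)
    have hinj₃ : Function.Injective (fun j : ↥t => s⁻¹ • (↑↑j : I)) := by
      intro a b h
      exact hinj₂ (MulAction.injective s⁻¹ h)
    have h12 : ∀ (a : ↥F) (b : ↥t), (↑a : I) ≠ ↑↑b :=
      fun a b h => absurd (h ▸ a.2) (↑b : {i : I // ¬ i ∈ F}).2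
    have h13 : ∀ (a : ↥F) (b : ↥t), (↑a : I) ≠ s⁻¹ • ↑↑b := by
      intro a b h
      exact (↑b : {i : I // ¬ i ∈ F}).2 ((hFiff s⁻¹ _).mp (h ▸ a.2))
    -- the distribution of finitely many moving coordinates
    set μt : Measure (↥t → X₀) := μ.map (fun x (j : ↥t) => x ↑↑j) with hμtdef
    have hμtmeas : Measurable (fun x : I → X₀ => fun j : ↥t => x ↑↑j) :=
      measurable_pi_lambda _ fun j => measurable_pi_apply _
    haveI : IsProbabilityMeasure μt := Measure.isProbabilityMeasure_map hμtmeas.aemeasurable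
    have hcylt : ∀ (tt : Finset ↥t) (g : ↥t → Set X₀), (∀ j, MeasurableSet (g j)) →
        μt {y | ∀ j ∈ tt, y j ∈ g j} = ∏ j ∈ tt, μ₀ (g j) := by
      intro tt g hg
      rw [hμtdef]
      exact Stmt5Aux.mapResCyl μ₀ μ hμ (fun j : ↥t => ↑↑j) hinj₂ tt g hg
    -- the triple map recording fixed coordinates, the t coordinates, and shifted t coordinates
    set Φ : (I → X₀) → (↥F → X₀) × ((↥t → X₀) × (↥t → X₀)) :=
      fun x => (πF x, (fun j => x ↑↑j, fun j => x (s⁻¹ • ↑↑j))) with hΦdef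
    have hΦmeas : Measurable Φ :=
      hπF.prodMk ((measurable_pi_lambda _ fun j => measurable_pi_apply _).prodMk
        (measurable_pi_lambda _ fun j => measurable_pi_apply _))
    have hmapΦ : μ.map Φ = μF.prod (μt.prod μt) := by
      haveI : IsProbabilityMeasure (μ.map Φ) := Measure.isProbabilityMeasure_map hΦmeas.aemeasurable
      refine Stmt5Aux2.ext_cylSets_prod₃ ?_
      rintro A ⟨t₁, f₁, hf₁, rfl⟩ Bc ⟨t₂, f₂, hf₂, rfl⟩ Bc' ⟨t₃, f₃, hf₃, rfl⟩
      rw [Measure.map_apply hΦmeas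
        ((Stmt5Aux.measurableSet_of_mem_cylSets ⟨t₁, f₁, hf₁, rfl⟩).prod
          ((Stmt5Aux.measurableSet_of_mem_cylSets ⟨t₂, f₂, hf₂, rfl⟩).prod
            (Stmt5Aux.measurableSet_of_mem_cylSets ⟨t₃, f₃, hf₃, rfl⟩))),
        Measure.prod_prod, Measure.prod_prod, hcylF t₁ f₁ hf₁, hcylt t₂ f₂ hf₂,
        hcylt t₃ f₃ hf₃]
      exact Stmt5Aux.cylProd₃ μ₀ μ hμ Subtype.val (fun j : ↥t => ↑↑j)
        (fun j : ↥t => s⁻¹ • ↑↑j) Subtype.val_injective hinj₂ hinj₃ h12 h13 hndisj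
        t₁ t₂ t₃ f₁ f₂ f₃ hf₁ hf₂ hf₃
    -- transport between the doubled infinite space and the doubled finite space
    set rt : ({i : I // ¬ i ∈ F} → X₀) → (↥t → X₀) := fun z j => z ↑j with hrtdef
    have hrt : Measurable rt := measurable_pi_lambda _ fun j => measurable_pi_apply _
    have hμGrt : μG.map rt = μt := by
      rw [hμGdef, Measure.map_map hrt hπG, hμtdef]
      rfl
    have hqmeas : Measurable (Prod.map (@id (↥F → X₀)) (Prod.map rt rt)) :=
      measurable_id.prodMap (hrt.prodMap hrt)
    have hmapq : ρ.map (Prod.map (@id (↥F → X₀)) (Prod.map rt rt)) = μF.prod (μt.prod μt) := by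
      rw [hρdef, ← Measure.map_prod_map _ _ measurable_id (hrt.prodMap hrt),
        Measure.map_id, ← Measure.map_prod_map _ _ hrt hrt, hμGrt]
    have hDv1 : MeasurableSet ((fun v : (↥F → X₀) × ((↥t → X₀) × (↥t → X₀)) =>
        (v.1, v.2.1)) ⁻¹' D) := (measurable_fst.prodMk (measurable_fst.comp measurable_snd)) hD
    have hDv2 : MeasurableSet ((fun v : (↥F → X₀) × ((↥t → X₀) × (↥t → X₀)) =>
        (v.1, v.2.2)) ⁻¹' D) := (measurable_fst.prodMk (measurable_snd.comp measurable_snd)) hD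
    have hΦ1 : Φ ⁻¹' ((fun v : (↥F → X₀) × ((↥t → X₀) × (↥t → X₀)) =>
        (v.1, v.2.1)) ⁻¹' D) = ψ t ⁻¹' D := rfl
    have hΦ2 : Φ ⁻¹' ((fun v : (↥F → X₀) × ((↥t → X₀) × (↥t → X₀)) =>
        (v.1, v.2.2)) ⁻¹' D)
        = (fun x : I → X₀ => fun i : I => x (s⁻¹ • i)) ⁻¹' (ψ t ⁻¹' D) := by
      have hpair : ∀ x : I → X₀,
          ψ t ((fun x : I → X₀ => fun i : I => x (s⁻¹ • i)) x)
            = (πF x, fun j : ↥t => x (s⁻¹ • ↑↑j)) := by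
        intro x
        refine Prod.ext ?_ rfl
        funext j
        show x (s⁻¹ • ↑j) = x ↑j
        rw [hFfix s⁻¹ ↑j j.2]
      ext x
      simp only [Set.mem_preimage, hpair]
      exact Iff.rfl
    -- the finite-coordinate version of the approximating set, inside the product space
    set C' : Set ((↥F → X₀) × ({i : I // ¬ i ∈ F} → X₀)) :=
      (fun p => (p.1, rt p.2)) ⁻¹' D with hC'def
    have hC'meas : MeasurableSet C' := (measurable_fst.prodMk (hrt.comp measurable_snd)) hD
    have heC : ⇑e ⁻¹' C' = ψ t ⁻¹' D := rfl
    have hC₁ : (fun w : (↥F → X₀) ×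
        (({i : I // ¬ i ∈ F} → X₀) × ({i : I // ¬ i ∈ F} → X₀)) => (w.1, w.2.1)) ⁻¹' C'
        = (Prod.map (@id (↥F → X₀)) (Prod.map rt rt)) ⁻¹'
          ((fun v : (↥F → X₀) × ((↥t → X₀) × (↥t → X₀)) => (v.1, v.2.1)) ⁻¹' D) := rfl
    have hC₂ : (fun w : (↥F → X₀) ×
        (({i : I // ¬ i ∈ F} → X₀) × ({i : I // ¬ i ∈ F} → X₀)) => (w.1, w.2.2)) ⁻¹' C'
        = (Prod.map (@id (↥F → X₀)) (Prod.map rt rt)) ⁻¹'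
          ((fun v : (↥F → X₀) × ((↥t → X₀) × (↥t → X₀)) => (v.1, v.2.2)) ⁻¹' D) := rfl
    have hρCC : ρ (symmDiff ((fun w : (↥F → X₀) ×
        (({i : I // ¬ i ∈ F} → X₀) × ({i : I // ¬ i ∈ F} → X₀)) => (w.1, w.2.1)) ⁻¹' C')
        ((fun w : (↥F → X₀) ×
        (({i : I // ¬ i ∈ F} → X₀) × ({i : I // ¬ i ∈ F} → X₀)) => (w.1, w.2.2)) ⁻¹' C'))
        = μ (symmDiff (ψ t ⁻¹' D)
            ((fun x : I → X₀ => fun i : I => x (s⁻¹ • i)) ⁻¹' (ψ t ⁻¹' D))) := by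
      rw [hC₁, hC₂, ← Set.preimage_symmDiff,
        ← Measure.map_apply hqmeas (hDv1.symmDiff hDv2), hmapq, ← hmapΦ,
        Measure.map_apply hΦmeas (hDv1.symmDiff hDv2), Set.preimage_symmDiff, hΦ1, hΦ2]
    have hT₁C₁ : ρ (symmDiff T₁ ((fun w : (↥F → X₀) ×
        (({i : I // ¬ i ∈ F} → X₀) × ({i : I // ¬ i ∈ F} → X₀)) => (w.1, w.2.1)) ⁻¹' C'))
        = μ (symmDiff T (ψ t ⁻¹' D)) := by
      rw [hT₁def, ← Set.preimage_symmDiff, ← Measure.map_apply hp12 (hT'.symmDiff hC'meas),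
        hmap12, ← hmape _ (hT'.symmDiff hC'meas), Set.preimage_symmDiff, hTpre, heC]
    have hC₂T₂ : ρ (symmDiff ((fun w : (↥F → X₀) ×
        (({i : I // ¬ i ∈ F} → X₀) × ({i : I // ¬ i ∈ F} → X₀)) => (w.1, w.2.2)) ⁻¹' C') T₂)
        = μ (symmDiff (ψ t ⁻¹' D) T) := by
      rw [hT₂def, ← Set.preimage_symmDiff, ← Measure.map_apply hp13 (hC'meas.symmDiff hT'),
        hmap13, ← hmape _ (hC'meas.symmDiff hT'), Set.preimage_symmDiff, hTpre, heC]
    -- bounds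
    have hclose : μ (symmDiff T (ψ t ⁻¹' D)) ≤ ENNReal.ofReal ε := le_of_lt hAappr
    have hclose' : μ (symmDiff (ψ t ⁻¹' D) T) ≤ ENNReal.ofReal ε := by
      rw [symmDiff_comm]; exact hclose
    have hTsTC : μ (symmDiff ((fun x : I → X₀ => fun i : I => x (s⁻¹ • i)) ⁻¹' T)
        ((fun x : I → X₀ => fun i : I => x (s⁻¹ • i)) ⁻¹' (ψ t ⁻¹' D)))
        ≤ ENNReal.ofReal ε := by
      rw [← Set.preimage_symmDiff, hshift s _ (hT.symmDiff hCmeas)]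
      exact hclose
    have hTTs : μ (symmDiff T ((fun x : I → X₀ => fun i : I => x (s⁻¹ • i)) ⁻¹' T)) = 0 := by
      rw [symmDiff_comm]; exact hinv s
    have hmid : μ (symmDiff (ψ t ⁻¹' D)
        ((fun x : I → X₀ => fun i : I => x (s⁻¹ • i)) ⁻¹' (ψ t ⁻¹' D)))
        ≤ ENNReal.ofReal ε + ENNReal.ofReal ε := by
      calc μ (symmDiff (ψ t ⁻¹' D)
          ((fun x : I → X₀ => fun i : I => x (s⁻¹ • i)) ⁻¹' (ψ t ⁻¹' D)))
          ≤ μ (symmDiff (ψ t ⁻¹' D) T) + μ (symmDiff T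
            ((fun x : I → X₀ => fun i : I => x (s⁻¹ • i)) ⁻¹' (ψ t ⁻¹' D))) :=
          measure_symmDiff_le _ _ _
        _ ≤ ENNReal.ofReal ε +
            (μ (symmDiff T ((fun x : I → X₀ => fun i : I => x (s⁻¹ • i)) ⁻¹' T)) +
             μ (symmDiff ((fun x : I → X₀ => fun i : I => x (s⁻¹ • i)) ⁻¹' T)
               ((fun x : I → X₀ => fun i : I => x (s⁻¹ • i)) ⁻¹' (ψ t ⁻¹' D)))) :=
          add_le_add hclose' (measure_symmDiff_le _ _ _)
        _ ≤ ENNReal.ofReal ε + (0 + ENNReal.ofReal ε) :=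
          add_le_add le_rfl (add_le_add (le_of_eq hTTs) hTsTC)
        _ = ENNReal.ofReal ε + ENNReal.ofReal ε := by rw [zero_add]
    calc ρ (symmDiff T₁ T₂)
        ≤ ρ (symmDiff T₁ ((fun w : (↥F → X₀) ×
            (({i : I // ¬ i ∈ F} → X₀) × ({i : I // ¬ i ∈ F} → X₀)) => (w.1, w.2.1)) ⁻¹' C'))
          + ρ (symmDiff ((fun w : (↥F → X₀) ×
            (({i : I // ¬ i ∈ F} → X₀) × ({i : I // ¬ i ∈ F} → X₀)) => (w.1, w.2.1)) ⁻¹' C')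
            T₂) := measure_symmDiff_le _ _ _
      _ ≤ ρ (symmDiff T₁ ((fun w : (↥F → X₀) ×
            (({i : I // ¬ i ∈ F} → X₀) × ({i : I // ¬ i ∈ F} → X₀)) => (w.1, w.2.1)) ⁻¹' C'))
          + (ρ (symmDiff ((fun w : (↥F → X₀) ×
            (({i : I // ¬ i ∈ F} → X₀) × ({i : I // ¬ i ∈ F} → X₀)) => (w.1, w.2.1)) ⁻¹' C')
            ((fun w : (↥F → X₀) ×
            (({i : I // ¬ i ∈ F} → X₀) × ({i : I // ¬ i ∈ F} → X₀)) => (w.1, w.2.2)) ⁻¹' C'))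
           + ρ (symmDiff ((fun w : (↥F → X₀) ×
            (({i : I // ¬ i ∈ F} → X₀) × ({i : I // ¬ i ∈ F} → X₀)) => (w.1, w.2.2)) ⁻¹' C')
            T₂)) := add_le_add le_rfl (measure_symmDiff_le _ _ _)
      _ = μ (symmDiff T (ψ t ⁻¹' D)) +
          (μ (symmDiff (ψ t ⁻¹' D)
            ((fun x : I → X₀ => fun i : I => x (s⁻¹ • i)) ⁻¹' (ψ t ⁻¹' D)))
           + μ (symmDiff (ψ t ⁻¹' D) T)) := by rw [hT₁C₁, hρCC, hC₂T₂]
      _ ≤ ENNReal.ofReal ε + ((ENNReal.ofReal ε + ENNReal.ofReal ε) + ENNReal.ofReal ε) :=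
          add_le_add hclose (add_le_add hmid hclose')
      _ = 4 * ENNReal.ofReal ε := by ring
  have hT₁T₂0 : ρ (symmDiff T₁ T₂) = 0 := by
    refine le_antisymm ?_ zero_le
    refine ENNReal.le_of_forall_pos_le_add fun ε hε _ => ?_
    rw [zero_add]
    have h4 : (4 : ℝ≥0∞) * ENNReal.ofReal ((ε : ℝ) / 4) = ENNReal.ofReal (ε : ℝ) := by
      rw [← ENNReal.ofReal_ofNat 4, ← ENNReal.ofReal_mul (by norm_num : (0:ℝ) ≤ (4:ℝ)),
        show (4:ℝ) * ((ε:ℝ) / 4) = (ε:ℝ) from by ring]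
    calc ρ (symmDiff T₁ T₂) ≤ 4 * ENNReal.ofReal ((ε : ℝ) / 4) :=
          hkey _ (by positivity)
      _ = ENNReal.ofReal (ε : ℝ) := h4
      _ = (ε : ℝ≥0∞) := ENNReal.ofReal_coe_nnreal
  have hρT₁ : ρ T₁ = μ T := by
    rw [hT₁def, ← Measure.map_apply hp12 hT', hmap12, ← hmape _ hT', hTpre]
  have hinterTT : ρ (T₁ ∩ T₂) = μ T := by
    have hdiff0 : ρ (T₁ \ T₂) = 0 :=
      measure_mono_null (by rw [Set.symmDiff_def]; exact Set.subset_union_left) hT₁T₂0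
    have hsplit := measure_inter_add_diff (μ := ρ) T₁ hT₂
    rw [hdiff0, add_zero] at hsplit
    rw [hsplit, hρT₁]
  have hint1 : ∫⁻ y, f y ∂μF = μ T := by
    simp only [hfdef]
    rw [← Measure.prod_apply hT', ← hmape _ hT', hTpre]
  have hint2 : ∫⁻ y, f y * f y ∂μF = ρ (T₁ ∩ T₂) := by
    rw [show ρ = μF.prod (μG.prod μG) from hρdef, Measure.prod_apply (hT₁.inter hT₂)]
    refine lintegral_congr fun y => ?_
    have hsec : Prod.mk y ⁻¹' (T₁ ∩ T₂) = (Prod.mk y ⁻¹' T') ×ˢ (Prod.mk y ⁻¹' T') := rfl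
    rw [hsec, Measure.prod_prod]
  have hff : ∫⁻ y, f y * f y ∂μF = ∫⁻ y, f y ∂μF := by rw [hint2, hinterTT, hint1]
  have hfin1 : ∫⁻ y, f y * f y ∂μF ≠ ⊤ := by
    rw [hff, hint1]; exact measure_ne_top μ T
  have hg0 : ∀ᵐ y ∂μF, f y * (1 - f y) = 0 := by
    have hgmeas : Measurable fun y => f y * (1 - f y) :=
      hf_meas.mul (measurable_const.sub hf_meas)
    refine (lintegral_eq_zero_iff hgmeas).mp ?_
    have hdecomp : ∫⁻ y, (f y * f y + f y * (1 - f y)) ∂μF = ∫⁻ y, f y ∂μF :=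
      lintegral_congr fun y => by
        rw [← mul_add, add_tsub_cancel_of_le (hfle y), mul_one]
    rw [lintegral_add_left (by exact hf_meas.mul hf_meas : Measurable fun y => f y * f y), ← hff] at hdecomp
    exact (ENNReal.add_right_inj hfin1).mp (hdecomp.trans (add_zero _).symm)
  have haeB : ∀ᵐ y ∂μF, f y = 0 ∨ f y = 1 := by
    filter_upwards [hg0] with y hy
    rcases mul_eq_zero.mp hy with h | h
    · exact Or.inl h
    · exact Or.inr (le_antisymm (hfle y) (tsub_eq_zero_iff_le.mp h))
  refine ⟨{y | f y = 1}, hf_meas (measurableSet_singleton 1), ?_⟩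
  have hBmeas : MeasurableSet {y : ↥F → X₀ | f y = 1} := hf_meas (measurableSet_singleton 1)
  have hBpre : πF ⁻¹' {y | f y = 1} = ⇑e ⁻¹' ({y | f y = 1} ×ˢ Set.univ) := by
    ext x
    constructor
    · intro hx
      exact ⟨hx, trivial⟩
    · intro hx
      exact hx.1
  have hsymmeas : MeasurableSet (symmDiff T' ({y : ↥F → X₀ | f y = 1} ×ˢ Set.univ)) :=
    hT'.symmDiff (hBmeas.prod MeasurableSet.univ)
  rw [hBpre, ← hTpre, ← Set.preimage_symmDiff, hmape _ hsymmeas,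
    Measure.prod_apply hsymmeas]
  have hae0 : ∀ᵐ y ∂μF,
      μG (Prod.mk y ⁻¹' (symmDiff T' ({y : ↥F → X₀ | f y = 1} ×ˢ Set.univ))) = 0 := by
    filter_upwards [haeB] with y hy
    have hsplit : Prod.mk y ⁻¹' (symmDiff T' ({y : ↥F → X₀ | f y = 1} ×ˢ Set.univ))
        = symmDiff (Prod.mk y ⁻¹' T')
          (Prod.mk y ⁻¹' ({y : ↥F → X₀ | f y = 1} ×ˢ Set.univ)) :=
      Set.preimage_symmDiff _ _
    rcases hy with h0 | h1
    · have hyB : Prod.mk y ⁻¹' ({y : ↥F → X₀ | f y = 1} ×ˢ Set.univ)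
          = (∅ : Set ({i : I // ¬ i ∈ F} → X₀)) := by
        ext z
        simp [h0]
      rw [hsplit, hyB, ← Set.bot_eq_empty, symmDiff_bot]
      exact h0
    · have hyB : Prod.mk y ⁻¹' ({y : ↥F → X₀ | f y = 1} ×ˢ Set.univ)
          = (Set.univ : Set ({i : I // ¬ i ∈ F} → X₀)) := by
        ext z
        simp [h1]
      rw [hsplit, hyB, ← Set.top_eq_univ, symmDiff_top, hnot_eq_compl]
      have hsecmeas : MeasurableSet (Prod.mk y ⁻¹' T') := measurable_prodMk_left hT'
      rw [measure_compl hsecmeas (measure_ne_top _ _), measure_univ,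
        show μG (Prod.mk y ⁻¹' T') = 1 from h1]
      simp
  rw [lintegral_congr_ae hae0, lintegral_zero]
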